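/- arXiv:1601.00043 — 2 statements merged into one kernel-verified Lean document; each statement's English description precedes it below -/
import Mathlib

section
/- Let 𝒯₀ be an E-closed set of complete theories and 𝒯'₀ ⊆ 𝒯₀ a generating set (i.e. Cl_E(𝒯'₀) = 𝒯₀). Then 𝒯'₀ is a minimal generating set if and only if every theory T ∈ 𝒯'₀ is isolated in 𝒯'₀ by some sentence, i.e. there exists φ ∈ T with {T' ∈ 𝒯'₀ : φ ∈ T'} = {T}. -/
open FirstOrder

/-- The E-closure of a family of theories: the family itself together with all
maximal (complete) theories each of whose sentences belongs to infinitely many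
members of the family (Proposition 2.2 of the paper). -/
def ClE {L : Language} (𝒯 : Set L.Theory) : Set L.Theory :=
  𝒯 ∪ {T | T.IsMaximal ∧ ∀ φ ∈ T, {T' ∈ 𝒯 | φ ∈ T'}.Infinite}

open Language

lemma my_mem_inf {L : Language} {T : L.Theory} (h : T.IsMaximal)
    {φ ψ : L.Sentence} (hφ : φ ∈ T) (hψ : ψ ∈ T) : φ ⊓ ψ ∈ T := by
  apply h.mem_of_models
  rw [Theory.models_sentence_iff]
  intro M
  have h1 : (M : Type _) ⊨ φ := Theory.realize_sentence_of_mem T hφ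
  have h2 : (M : Type _) ⊨ ψ := Theory.realize_sentence_of_mem T hψ
  exact (Formula.realize_inf).2 ⟨h1, h2⟩

lemma my_inf_mem {L : Language} {T : L.Theory} (h : T.IsMaximal)
    {φ ψ : L.Sentence} (hφψ : φ ⊓ ψ ∈ T) : φ ∈ T ∧ ψ ∈ T := by
  obtain ⟨M⟩ := h.1
  have hM : (M : Type _) ⊨ φ ⊓ ψ := Theory.realize_sentence_of_mem T hφψ
  rw [Sentence.Realize, Formula.realize_inf] at hM
  constructor
  · refine (h.2 φ).resolve_right fun hc => ?_
    have := Theory.realize_sentence_of_mem T (M := M) hc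
    rw [Sentence.realize_not] at this
    exact this hM.1
  · refine (h.2 ψ).resolve_right fun hc => ?_
    have := Theory.realize_sentence_of_mem T (M := M) hc
    rw [Sentence.realize_not] at this
    exact this hM.2

lemma my_not_both {L : Language} {T : L.Theory} (h : T.IsMaximal)
    {φ : L.Sentence} (hφ : φ ∈ T) (hn : φ.not ∈ T) : False := by
  obtain ⟨M⟩ := h.1
  have h1 : (M : Type _) ⊨ φ := Theory.realize_sentence_of_mem T hφ
  have h2 : (M : Type _) ⊨ φ.not := Theory.realize_sentence_of_mem T hn
  rw [Sentence.realize_not] at h2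
  exact h2 h1

/-- Two distinct maximal theories are separated by a sentence. -/
lemma my_separate {L : Language} {T T' : L.Theory} (h : T.IsMaximal)
    (h' : T'.IsMaximal) (hne : T ≠ T') : ∃ φ ∈ T, φ.not ∈ T' := by
  have : ¬ (T ⊆ T') := by
    intro hss
    apply hne
    apply Set.Subset.antisymm hss
    intro φ hφ
    refine (h.2 φ).resolve_right fun hc => ?_
    exact absurd (hss hc) (fun hn => my_not_both h' hφ hn)
  obtain ⟨φ, hφT, hφT'⟩ := Set.not_subset.1 this
  exact ⟨φ, hφT, (h'.2 φ).resolve_left hφT'⟩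

/-- If some sentence of `T` has only finitely many supporters in `𝒜`, then `T`
is isolated in `𝒜` by a sentence. -/
lemma my_isolate {L : Language} {𝒜 : Set L.Theory} (hA : ∀ T' ∈ 𝒜, T'.IsMaximal)
    {T : L.Theory} (hT : T ∈ 𝒜) :
    ∀ (n : ℕ) (φ : L.Sentence), φ ∈ T → ∀ (hf : {T' ∈ 𝒜 | φ ∈ T'}.Finite),
      hf.toFinset.card ≤ n → ∃ ψ ∈ T, {T' ∈ 𝒜 | ψ ∈ T'} = {T} := by
  classical
  intro n
  induction n with
  | zero =>
    intro φ hφ hf hcard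
    exfalso
    have : T ∈ hf.toFinset := by simp [Set.mem_setOf_eq, hT, hφ]
    have := Finset.card_pos.2 ⟨T, this⟩
    omega
  | succ n ih =>
    intro φ hφ hf hcard
    by_cases hset : {T' ∈ 𝒜 | φ ∈ T'} = {T}
    · exact ⟨φ, hφ, hset⟩
    · have hTmem : T ∈ {T' ∈ 𝒜 | φ ∈ T'} := ⟨hT, hφ⟩
      obtain ⟨T₁, hT₁, hT₁ne⟩ : ∃ T₁ ∈ {T' ∈ 𝒜 | φ ∈ T'}, T₁ ≠ T := by
        by_contra hcon
        push_neg at hcon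
        exact hset (Set.Subset.antisymm (fun x hx => hcon x hx) (fun x hx => hx ▸ hTmem))
      obtain ⟨χ, hχT, hχT₁⟩ := my_separate (hA T hT) (hA T₁ hT₁.1) (Ne.symm hT₁ne)
      have hφ' : φ ⊓ χ ∈ T := my_mem_inf (hA T hT) hφ hχT
      have hsub : {T' ∈ 𝒜 | φ ⊓ χ ∈ T'} ⊆ {T' ∈ 𝒜 | φ ∈ T'} \ {T₁} := by
        rintro T' ⟨hT'A, hT'φχ⟩
        obtain ⟨h1, h2⟩ := my_inf_mem (hA T' hT'A) hT'φχ
        refine ⟨⟨hT'A, h1⟩, fun heq => ?_⟩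
        rw [Set.mem_singleton_iff] at heq
        exact my_not_both (hA T₁ hT₁.1) (heq ▸ h2) hχT₁
      have hf' : {T' ∈ 𝒜 | φ ⊓ χ ∈ T'}.Finite := hf.diff.subset hsub
      refine ih (φ ⊓ χ) hφ' hf' ?_
      have h1 : hf'.toFinset ⊆ hf.toFinset.erase T₁ := by
        intro x hx
        rw [Set.Finite.mem_toFinset] at hx
        have := hsub hx
        rw [Finset.mem_erase, Set.Finite.mem_toFinset]
        exact ⟨this.2 ∘ Set.mem_singleton_iff.mpr ∘ id, this.1⟩
      calc hf'.toFinset.card ≤ (hf.toFinset.erase T₁).card := Finset.card_le_card h1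
        _ ≤ hf.toFinset.card - 1 := by
            apply Nat.le_sub_one_of_lt
            apply Finset.card_erase_lt_of_mem
            rw [Set.Finite.mem_toFinset]; exact hT₁
        _ ≤ n := by omega

/-- Theorem 3.2, (2) ⇔ (3): a generating set of an E-closed set is minimal iff
each of its theories is isolated inside it by a sentence. -/
theorem minimal_generating_iff_isolated {L : Language}
    (𝒯₀ 𝒯'₀ : Set L.Theory)
    (hcomp : ∀ T ∈ 𝒯₀, T.IsMaximal)
    (hclosed : ClE 𝒯₀ = 𝒯₀)
    (hsub : 𝒯'₀ ⊆ 𝒯₀)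
    (hgen : ClE 𝒯'₀ = 𝒯₀) :
    (∀ S ⊂ 𝒯'₀, ClE S ≠ 𝒯₀) ↔
      (∀ T ∈ 𝒯'₀, ∃ φ ∈ T, {T' ∈ 𝒯'₀ | φ ∈ T'} = {T}) := by
  have hA : ∀ T' ∈ 𝒯'₀, T'.IsMaximal := fun T' hT' => hcomp T' (hsub hT')
  constructor
  · -- minimal → isolated
    intro hmin T hT
    by_contra hcon
    push_neg at hcon
    -- every sentence of T has infinitely many supporters in 𝒯'₀
    have hinf : ∀ φ ∈ T, {T' ∈ 𝒯'₀ | φ ∈ T'}.Infinite := by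
      intro φ hφ
      intro hfin
      obtain ⟨ψ, hψ, hiso⟩ := my_isolate hA hT hfin.toFinset.card φ hφ hfin le_rfl
      exact hcon ψ hψ hiso
    -- remove T from 𝒯'₀
    set S := 𝒯'₀ \ {T} with hS
    have hSsub : S ⊂ 𝒯'₀ := by
      constructor
      · exact Set.diff_subset
      · intro hss
        have := hss hT
        exact this.2 rfl
    apply hmin S hSsub
    -- ClE S = 𝒯₀
    have hTinClES : T ∈ ClE S := by
      right
      refine ⟨hA T hT, fun φ hφ => ?_⟩
      have : {T' ∈ S | φ ∈ T'} = {T' ∈ 𝒯'₀ | φ ∈ T'} \ {T} := by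
        ext x
        simp only [Set.mem_setOf_eq, Set.mem_diff, Set.mem_singleton_iff, hS]
        tauto
      rw [this]
      exact (hinf φ hφ).diff (Set.finite_singleton T)
    apply Set.Subset.antisymm
    · -- ClE S ⊆ 𝒯₀
      rintro T'' (h1 | h2)
      · exact hsub h1.1
      · rw [← hgen]
        right
        refine ⟨h2.1, fun φ hφ => ?_⟩
        exact (h2.2 φ hφ).mono (fun x hx => ⟨hx.1.1, hx.2⟩)
    · -- 𝒯₀ ⊆ ClE S
      intro T'' hT''
      rw [← hgen] at hT''
      rcases hT'' with h1 | h2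
      · by_cases heq : T'' = T
        · exact heq ▸ hTinClES
        · exact Or.inl ⟨h1, heq⟩
      · right
        refine ⟨h2.1, fun φ hφ => ?_⟩
        have : {T' ∈ S | φ ∈ T'} = {T' ∈ 𝒯'₀ | φ ∈ T'} \ {T} := by
          ext x
          simp only [Set.mem_setOf_eq, Set.mem_diff, Set.mem_singleton_iff, hS]
          tauto
        rw [this]
        exact (h2.2 φ hφ).diff (Set.finite_singleton T)
  · -- isolated → minimal
    intro hiso S hSsub hClE
    obtain ⟨T, hT𝒯', hTS⟩ := Set.exists_of_ssubset hSsub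
    obtain ⟨φ, hφT, hφiso⟩ := hiso T hT𝒯'
    have hT𝒯₀ : T ∈ 𝒯₀ := hsub hT𝒯'
    rw [← hClE] at hT𝒯₀
    rcases hT𝒯₀ with h1 | h2
    · exact hTS h1
    · have := h2.2 φ hφT
      apply this
      have : {T' ∈ S | φ ∈ T'} ⊆ {T' ∈ 𝒯'₀ | φ ∈ T'} := fun x hx =>
        ⟨hSsub.1 hx.1, hx.2⟩
      rw [hφiso] at this
      exact (Set.finite_singleton T).subset this
end

section
/- Let F be a family of subsets of an infinite set I₀ linearly ordered by inclusion, and let (F⁻, F⁺) be a cut of F (F = F⁻ ∪ F⁺, F⁻ < F⁺ elementwise, both nonempty) with ⋃ F⁻ strictly contained in ⋂ F⁺ and with some element j* ∈ (⋂ F⁺) \ (⋃ F⁻). Then Cl(F) = Cl(F⁻) ∪ Cl(F⁺), and a set G ⊆ Cl(F) is generating for Cl(F) if and only if G ∩ Cl(F⁻) generates Cl(F⁻) and G ∩ Cl(F⁺) generates Cl(F⁺). -/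
/-- Combinatorial closure on families of index sets (Corollary 4.7 of the paper):
`J` is in the closure of `F` iff `J ∈ F` or for every finite `J₀` infinitely many
members of `F` agree with `J` on `J₀`. -/
def Cl {I₀ : Type*} (F : Set (Set I₀)) : Set (Set I₀) :=
  F ∪ {J | ∀ J₀ : Finset I₀, {I ∈ F | I ∩ ↑J₀ = J ∩ ↑J₀}.Infinite}

lemma subset_Cl {I₀ : Type*} (F : Set (Set I₀)) : F ⊆ Cl F :=
  Set.subset_union_left

lemma Cl_mono {I₀ : Type*} {F F' : Set (Set I₀)} (h : F ⊆ F') : Cl F ⊆ Cl F' := by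
  rintro J (hJ | hJ)
  · exact Or.inl (h hJ)
  · exact Or.inr fun J₀ => (hJ J₀).mono (fun I hI => ⟨h hI.1, hI.2⟩)

lemma agree_mono {I₀ : Type*} {I J S S' : Set I₀} (hS : S ⊆ S')
    (h : I ∩ S' = J ∩ S') : I ∩ S = J ∩ S := by
  ext x
  simp only [Set.mem_inter_iff]
  constructor
  · rintro ⟨h1, h2⟩
    have hx : x ∈ J ∩ S' := h ▸ (⟨h1, hS h2⟩ : x ∈ I ∩ S')
    exact ⟨hx.1, h2⟩
  · rintro ⟨h1, h2⟩
    have hx : x ∈ I ∩ S' := h.symm ▸ (⟨h1, hS h2⟩ : x ∈ J ∩ S')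
    exact ⟨hx.1, h2⟩

lemma agree_mem {I₀ : Type*} {I J S : Set I₀} (h : I ∩ S = J ∩ S) {x : I₀}
    (hx : x ∈ S) : x ∈ I ↔ x ∈ J := by
  have hx' := Set.ext_iff.mp h x
  simp only [Set.mem_inter_iff] at hx'
  constructor <;> intro h1
  · exact (hx'.mp ⟨h1, hx⟩).1
  · exact (hx'.mpr ⟨h1, hx⟩).1

lemma Cl_Cl {I₀ : Type*} (F : Set (Set I₀)) : Cl (Cl F) = Cl F := by
  apply subset_antisymm _ (Cl_mono (subset_Cl F))
  rintro J (hJ | hJ)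
  · exact hJ
  · right
    intro J₀
    by_contra hfin
    rw [Set.not_infinite] at hfin
    -- infinitely many members of Cl F agree with J on J₀
    have h1 := hJ J₀
    -- find a limit member agreeing with J on J₀
    have : ∃ I, I ∈ Cl F ∧ I ∉ F ∧ I ∩ ↑J₀ = J ∩ ↑J₀ := by
      by_contra hno
      push_neg at hno
      apply hfin.not_infinite
      refine h1.mono ?_
      rintro I ⟨hIF, hIa⟩
      by_cases hI : I ∈ F
      · exact ⟨hI, hIa⟩
      · exact absurd hIa (hno I hIF hI)
    obtain ⟨I, hICl, hInF, hIa⟩ := this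
    have hIlim : ∀ J₀ : Finset I₀, {I' ∈ F | I' ∩ ↑J₀ = I ∩ ↑J₀}.Infinite := by
      rcases hICl with h | h
      · exact absurd h hInF
      · exact h
    apply hfin.not_infinite
    refine (hIlim J₀).mono ?_
    rintro I' ⟨hI'F, hI'a⟩
    exact ⟨hI'F, hI'a.trans hIa⟩

lemma notmem_of_mem_Cl {I₀ : Type*} {Fm : Set (Set I₀)} {jstar : I₀}
    (h : jstar ∉ ⋃₀ Fm) : ∀ J ∈ Cl Fm, jstar ∉ J := by
  rintro J (hJ | hJ) hj
  · exact h ⟨J, hJ, hj⟩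
  · obtain ⟨I, hIF, hIa⟩ := (hJ {jstar}).nonempty
    have hjI : jstar ∈ I := by
      have : jstar ∈ (↑({jstar} : Finset I₀) : Set I₀) := by simp
      exact (agree_mem hIa this).2 hj
    exact h ⟨I, hIF, hjI⟩

lemma mem_of_mem_Cl {I₀ : Type*} {Fp : Set (Set I₀)} {jstar : I₀}
    (h : jstar ∈ ⋂₀ Fp) : ∀ J ∈ Cl Fp, jstar ∈ J := by
  rintro J (hJ | hJ)
  · exact h J hJ
  · obtain ⟨I, hIF, hIa⟩ := (hJ {jstar}).nonempty
    have : jstar ∈ (↑({jstar} : Finset I₀) : Set I₀) := by simp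
    exact (agree_mem hIa this).1 (h I hIF)

/-- Proposition 4.14 / Corollary 4.15: for a cut `(F⁻, F⁺)` of the chain `F`
separated by an element `j*`, the closure splits as a union, and generating
sets split accordingly. -/
theorem Cl_cut_split {I₀ : Type*} [Infinite I₀]
    (F Fm Fp : Set (Set I₀)) (hchain : IsChain (· ⊆ ·) F)
    (hcut : F = Fm ∪ Fp) (hm : Fm.Nonempty) (hp : Fp.Nonempty)
    (hlt : ∀ A ∈ Fm, ∀ B ∈ Fp, A ⊂ B)
    (hssub : ⋃₀ Fm ⊂ ⋂₀ Fp)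
    (jstar : I₀) (hjstar : jstar ∈ (⋂₀ Fp) \ (⋃₀ Fm)) :
    Cl F = Cl Fm ∪ Cl Fp ∧
      ∀ G ⊆ Cl F, (Cl G = Cl F ↔
        Cl (G ∩ Cl Fm) = Cl Fm ∧ Cl (G ∩ Cl Fp) = Cl Fp) := by
  classical
  have hjm : ∀ J ∈ Cl Fm, jstar ∉ J := notmem_of_mem_Cl hjstar.2
  have hjp : ∀ J ∈ Cl Fp, jstar ∈ J := mem_of_mem_Cl hjstar.1
  -- a non-member limit point of any H ⊆ Cl F splits according to jstar
  have key : ∀ H ⊆ Cl Fm ∪ Cl Fp, ∀ J,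
      (∀ J₀ : Finset I₀, {I ∈ H | I ∩ ↑J₀ = J ∩ ↑J₀}.Infinite) →
      (jstar ∉ J → J ∈ Cl (H ∩ Cl Fm)) ∧ (jstar ∈ J → J ∈ Cl (H ∩ Cl Fp)) := by
    intro H hH J hJ
    constructor
    · intro hj
      right
      intro J₀
      refine (hJ (insert jstar J₀)).mono ?_
      rintro I ⟨hIH, hIa⟩
      have hjmem : jstar ∈ (↑(insert jstar J₀) : Set I₀) := by simp
      have hjI : jstar ∉ I := fun h => hj ((agree_mem hIa hjmem).1 h)
      have hIm : I ∈ Cl Fm := by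
        rcases hH hIH with h | h
        · exact h
        · exact absurd (hjp I h) hjI
      refine ⟨⟨hIH, hIm⟩, agree_mono ?_ hIa⟩
      simp [Set.subset_insert]
    · intro hj
      right
      intro J₀
      refine (hJ (insert jstar J₀)).mono ?_
      rintro I ⟨hIH, hIa⟩
      have hjmem : jstar ∈ (↑(insert jstar J₀) : Set I₀) := by simp
      have hjI : jstar ∈ I := (agree_mem hIa hjmem).2 hj
      have hIp : I ∈ Cl Fp := by
        rcases hH hIH with h | h
        · exact absurd hjI (hjm I h)
        · exact h
      refine ⟨⟨hIH, hIp⟩, agree_mono ?_ hIa⟩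
      simp [Set.subset_insert]
  have hsplit : Cl F = Cl Fm ∪ Cl Fp := by
    apply subset_antisymm
    · rintro J hJ
      rcases hJ with hJ | hJ
      · rw [hcut] at hJ
        exact hJ.imp (fun h => subset_Cl _ h) (fun h => subset_Cl _ h)
      · have hJ' : ∀ J₀ : Finset I₀, {I ∈ F | I ∩ ↑J₀ = J ∩ ↑J₀}.Infinite := hJ
        have hFsub : F ⊆ Cl Fm ∪ Cl Fp := by
          rw [hcut]
          exact Set.union_subset_union (subset_Cl _) (subset_Cl _)
        by_cases hj : jstar ∈ J
        · right
          have := ((key F hFsub J hJ').2 hj)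
          exact (Cl_mono Set.inter_subset_right) this |>.elim
            (fun h => (Cl_Cl Fp) ▸ (subset_Cl _ h : _ ∈ Cl (Cl Fp)))
            (fun h => (Cl_Cl Fp) ▸ (Or.inr h : _ ∈ Cl (Cl Fp)))
        · left
          have := ((key F hFsub J hJ').1 hj)
          have h2 : J ∈ Cl (Cl Fm) := Cl_mono Set.inter_subset_right this
          rwa [Cl_Cl] at h2
    · rw [hcut]
      exact Set.union_subset (Cl_mono Set.subset_union_left)
        (Cl_mono Set.subset_union_right)
  refine ⟨hsplit, fun G hG => ?_⟩
  constructor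
  · intro hGF
    constructor
    · apply subset_antisymm
      · have : Cl (G ∩ Cl Fm) ⊆ Cl (Cl Fm) := Cl_mono Set.inter_subset_right
        rwa [Cl_Cl] at this
      · intro J hJ
        have hJF : J ∈ Cl G := by
          rw [hGF, hsplit]; exact Or.inl hJ
        rcases hJF with hJG | hJG
        · exact subset_Cl _ ⟨hJG, hJ⟩
        · exact (key G (hsplit ▸ hG) J hJG).1 (hjm J hJ)
    · apply subset_antisymm
      · have : Cl (G ∩ Cl Fp) ⊆ Cl (Cl Fp) := Cl_mono Set.inter_subset_right
        rwa [Cl_Cl] at this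
      · intro J hJ
        have hJF : J ∈ Cl G := by
          rw [hGF, hsplit]; exact Or.inr hJ
        rcases hJF with hJG | hJG
        · exact subset_Cl _ ⟨hJG, hJ⟩
        · exact (key G (hsplit ▸ hG) J hJG).2 (hjp J hJ)
  · rintro ⟨h1, h2⟩
    apply subset_antisymm
    · have : Cl G ⊆ Cl (Cl F) := Cl_mono hG
      rwa [Cl_Cl] at this
    · rw [hsplit]
      refine Set.union_subset ?_ ?_
      · rw [← h1]; exact Cl_mono Set.inter_subset_left
      · rw [← h2]; exact Cl_mono Set.inter_subset_left
end
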